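/- arXiv:2105.02931 — 7 statements merged into one kernel-verified Lean document; each statement's English description precedes it below -/
import Mathlib

section
/- Fix θ₋ᵢ > 0 and λ > 0. The Cournot equilibrium effort aᵢ*(θᵢ) = λθᵢ(θ₋ᵢ + 1)/((2θᵢ+1)(2θ₋ᵢ+1) - θᵢθ₋ᵢ) is strictly increasing in θᵢ on (0, ∞). -/
theorem stmt_3 (θmi lam : ℝ) (hθ : 0 < θmi) (hlam : 0 < lam) :
    StrictMonoOn
      (fun θi : ℝ => lam * θi * (θmi + 1) / ((2 * θi + 1) * (2 * θmi + 1) - θi * θmi))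
      (Set.Ioi 0) := by
  intro x hx y hy hxy
  simp only [Set.mem_Ioi] at hx hy
  have hdx : (0:ℝ) < (2 * x + 1) * (2 * θmi + 1) - x * θmi := by nlinarith
  have hdy : (0:ℝ) < (2 * y + 1) * (2 * θmi + 1) - y * θmi := by nlinarith
  rw [div_lt_div_iff₀ hdx hdy]
  nlinarith [mul_pos hlam hθ, mul_pos (mul_pos hlam hθ) (sub_pos.mpr hxy)]
end

section
/- Fix θᵢ > 0 and λ > 0. The Cournot equilibrium effort aᵢ*(θ₋ᵢ) = λθᵢ(θ₋ᵢ + 1)/((2θᵢ+1)(2θ₋ᵢ+1) - θᵢθ₋ᵢ) is strictly decreasing in θ₋ᵢ on (0, ∞). -/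
theorem stmt_4 (θi lam : ℝ) (hθ : 0 < θi) (hlam : 0 < lam) :
    StrictAntiOn
      (fun θmi : ℝ => lam * θi * (θmi + 1) / ((2 * θi + 1) * (2 * θmi + 1) - θi * θmi))
      (Set.Ioi 0) := by
  intro a ha b hb hab
  simp only [Set.mem_Ioi] at ha hb
  have hda : (0:ℝ) < (2 * θi + 1) * (2 * a + 1) - θi * a := by nlinarith
  have hdb : (0:ℝ) < (2 * θi + 1) * (2 * b + 1) - θi * b := by nlinarith
  simp only
  rw [div_lt_div_iff₀ hdb hda]
  nlinarith [mul_pos (mul_pos (mul_pos hlam hθ) (by linarith : (0:ℝ) < θi + 1)) (sub_pos.2 hab)]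
end

section
/- For θ > 0, the inequality λ²θ(4θ+3)/(8(2θ+1)²) > λ²θ(θ+1)²(2θ+1)/(2[(2θ+1)² - θ²]²) holds for every λ ≠ 0 if and only if θ > (1+√17)/8. -/
theorem stmt_5 (θ : ℝ) (hθ : 0 < θ) :
    (∀ lam : ℝ, lam ≠ 0 →
      lam ^ 2 * θ * (4 * θ + 3) / (8 * (2 * θ + 1) ^ 2) >
      lam ^ 2 * θ * (θ + 1) ^ 2 * (2 * θ + 1) / (2 * ((2 * θ + 1) ^ 2 - θ ^ 2) ^ 2)) ↔
    θ > (1 + Real.sqrt 17) / 8 := by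
  have h17 : Real.sqrt 17 ^ 2 = 17 := Real.sq_sqrt (by norm_num)
  have h17' : (4:ℝ) < Real.sqrt 17 := by
    nlinarith [Real.sqrt_nonneg 17]
  have d1 : (0:ℝ) < 8 * (2 * θ + 1) ^ 2 := by positivity
  have d2 : (0:ℝ) < 2 * ((2 * θ + 1) ^ 2 - θ ^ 2) ^ 2 := by nlinarith [sq_nonneg θ]
  constructor
  · intro h
    have h1 := h 1 one_ne_zero
    rw [gt_iff_lt, div_lt_div_iff₀ d2 d1] at h1
    have key : 4 * θ ^ 2 - θ - 1 > 0 := by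
      by_contra hk
      push_neg at hk
      have hp : θ * (θ + 1) ^ 3 > 0 := by positivity
      nlinarith [mul_nonpos_of_nonneg_of_nonpos hp.le hk]
    rw [gt_iff_lt, div_lt_iff₀ (by norm_num : (0:ℝ) < 8)]
    nlinarith [Real.sqrt_nonneg 17]
  · intro h lam hlam
    have hl : (0:ℝ) < lam ^ 2 := by positivity
    have key : 4 * θ ^ 2 - θ - 1 > 0 := by nlinarith [Real.sqrt_nonneg 17]
    rw [gt_iff_lt, div_lt_div_iff₀ d2 d1]
    have hp : (0:ℝ) < lam ^ 2 * θ * (θ + 1) ^ 3 * (4 * θ ^ 2 - θ - 1) := by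
      have : (0:ℝ) < (θ + 1) ^ 3 := by positivity
      positivity
    nlinarith [hp]
end

section
/- For θ > 0, the polynomial inequality 4θ⁵ + 11θ⁴ + 8θ³ > 2θ² + 4θ + 1 holds if and only if θ > (1+√17)/8. -/
theorem stmt_6 (θ : ℝ) (hθ : 0 < θ) :
    4 * θ ^ 5 + 11 * θ ^ 4 + 8 * θ ^ 3 > 2 * θ ^ 2 + 4 * θ + 1 ↔
    θ > (1 + Real.sqrt 17) / 8 := by
  have hs : Real.sqrt 17 ^ 2 = 17 := Real.sq_sqrt (by norm_num)
  have hs4 : (4:ℝ) < Real.sqrt 17 := by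
    nlinarith [Real.sqrt_nonneg 17]
  constructor
  · intro h
    by_contra hle
    push_neg at hle
    -- θ ≤ (1+√17)/8, so θ - (1+√17)/8 ≤ 0 and θ - (1-√17)/8 > 0
    nlinarith [mul_nonneg (sub_nonneg.2 hle) (le_of_lt (by nlinarith : (0:ℝ) < θ - (1 - Real.sqrt 17)/8)),
      pow_pos (by linarith : (0:ℝ) < θ + 1) 3, sq_nonneg θ, sq_nonneg (θ+1), hθ.le]
  · intro h
    have h1 : 0 < θ - (1 + Real.sqrt 17)/8 := by linarith
    have h2 : 0 < θ - (1 - Real.sqrt 17)/8 := by nlinarith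
    nlinarith [mul_pos h1 h2, pow_pos (by linarith : (0:ℝ) < θ + 1) 3, sq_nonneg θ, hθ.le]
end

section
/- Let θ > 0 and λ ≠ 0. The inequality λ²θ̂(4θθ̂ + 4θ - θ̂)/(8θ(2θ̂+1)²) > λ²θ(4θ+3)/(8(2θ+1)²) holds if and only if θ < θ̂ < θ(4θ+3). -/
theorem stmt_7 (θ θhat lam : ℝ) (hθ : 0 < θ) (hlam : lam ≠ 0) :
    lam ^ 2 * θhat * (4 * θ * θhat + 4 * θ - θhat) / (8 * θ * (2 * θhat + 1) ^ 2) >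
      lam ^ 2 * θ * (4 * θ + 3) / (8 * (2 * θ + 1) ^ 2) ↔
    θ < θhat ∧ θhat < θ * (4 * θ + 3) := by
  have hl : 0 < lam ^ 2 := by positivity
  have hrpos : 0 < lam ^ 2 * θ * (4 * θ + 3) / (8 * (2 * θ + 1) ^ 2) := by positivity
  rcases eq_or_ne θhat (-1/2) with h | h
  · subst h
    constructor
    · intro hc
      exfalso
      have hz : lam ^ 2 * (-1/2) * (4 * θ * (-1/2) + 4 * θ - (-1/2)) /
          (8 * θ * (2 * (-1/2) + 1) ^ 2) = 0 := by
        norm_num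
      rw [hz] at hc
      linarith
    · rintro ⟨h1, h2⟩
      linarith
  · have hd1 : 0 < 8 * θ * (2 * θhat + 1) ^ 2 := by
      have : (2 * θhat + 1) ≠ 0 := by
        intro hc; apply h; linarith
      positivity
    have hd2 : (0:ℝ) < 8 * (2 * θ + 1) ^ 2 := by positivity
    rw [gt_iff_lt, div_lt_div_iff₀ hd2 hd1]
    constructor
    · intro hc
      have key : 0 < (θhat - θ) * (θ * (4 * θ + 3) - θhat) := by
        nlinarith [mul_pos hl hθ]
      constructor
      · by_contra h'
        push_neg at h'
        nlinarith [key, mul_nonneg (mul_nonneg (sub_nonneg.2 h') hθ.le) hθ.le,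
          mul_nonneg (sub_nonneg.2 h') hθ.le, sq_nonneg (θ - θhat)]
      · by_contra h'
        push_neg at h'
        nlinarith [key, mul_nonneg (mul_nonneg (sub_nonneg.2 h') hθ.le) hθ.le,
          mul_nonneg (sub_nonneg.2 h') hθ.le, sq_nonneg (θhat - θ * (4 * θ + 3))]
    · rintro ⟨h1, h2⟩
      nlinarith [mul_pos (mul_pos hl hθ) (mul_pos (sub_pos.2 h1) (sub_pos.2 h2))]
end

section
/- For all θ₁, θ₂ > 0, the Cournot equilibrium effort λθ₁(θ₂+1)/((2θ₁+1)(2θ₂+1) - θ₁θ₂) of agent 1 is strictly less than the θ₁-monopoly effort λθ₁/(2θ₁+1), for any λ > 0. -/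
theorem stmt_17 (θ₁ θ₂ lam : ℝ) (hθ₁ : 0 < θ₁) (hθ₂ : 0 < θ₂) (hlam : 0 < lam) :
    lam * θ₁ * (θ₂ + 1) / ((2 * θ₁ + 1) * (2 * θ₂ + 1) - θ₁ * θ₂) <
    lam * θ₁ / (2 * θ₁ + 1) := by
  rw [div_lt_div_iff₀ (by nlinarith) (by nlinarith)]
  nlinarith [mul_pos hlam hθ₁, mul_pos (mul_pos hlam hθ₁) hθ₂]
end

section
/- For θ > (1+√17)/8, two agents of identical type θ each exerting half the θ-monopoly effort λθ/(2(2θ+1)) obtain strictly greater utility λ²θ(4θ+3)/(8(2θ+1)²) than the Cournot equilibrium utility λ²θ(θ+1)²(2θ+1)/(2(3θ²+4θ+1)²), for any λ > 0. -/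
theorem stmt_19 (θ lam : ℝ) (hθ : θ > (1 + Real.sqrt 17) / 8) (hlam : 0 < lam) :
    lam ^ 2 * θ * (4 * θ + 3) / (8 * (2 * θ + 1) ^ 2) >
    lam ^ 2 * θ * (θ + 1) ^ 2 * (2 * θ + 1) / (2 * (3 * θ ^ 2 + 4 * θ + 1) ^ 2) := by
  have hs : Real.sqrt 17 > 4 := by
    nlinarith [Real.sq_sqrt (by norm_num : (17:ℝ) ≥ 0), Real.sqrt_nonneg 17]
  have hθ5 : θ > 5/8 := by linarith
  have hkey : 4 * θ^2 - θ - 1 > 0 := by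
    have h1 : 8 * θ - 1 > Real.sqrt 17 := by linarith
    nlinarith [Real.sq_sqrt (by norm_num : (17:ℝ) ≥ 0)]
  rw [gt_iff_lt, div_lt_div_iff₀ (by nlinarith) (by positivity)]
  nlinarith [sq_nonneg lam, mul_pos (mul_pos (pow_pos hlam 2) (by linarith : (0:ℝ) < θ)) hkey, sq_nonneg (lam*θ), mul_pos (pow_pos hlam 2) hkey]
end
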